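/- Let B be a Banach A-bimodule. If there exists a₀ ∈ A such that B** = a₀B** (i.e., every b'' ∈ B** equals π_ℓ***(a₀, x'') for some x'' ∈ B**) and a₀ has the Rw*w-property with respect to B, then Z_{A**}(B**) = B**. -/

import Mathlib

open Filter Topology

/-- `arensHalf m y''` is the map `z' ↦ m**(y'', z')`, where
`⟨m*(z', x), y⟩ = ⟨z', m(x,y)⟩` and `⟨m**(y'', z'), x⟩ = ⟨y'', m*(z', x)⟩`. -/
noncomputable def arensHalf {X Y Z : Type*} [NormedAddCommGroup X] [NormedSpace ℝ X]
    [NormedAddCommGroup Y] [NormedSpace ℝ Y] [NormedAddCommGroup Z] [NormedSpace ℝ Z]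
    (m : X →L[ℝ] Y →L[ℝ] Z) (y'' : (Y →L[ℝ] ℝ) →L[ℝ] ℝ) :
    (Z →L[ℝ] ℝ) →L[ℝ] (X →L[ℝ] ℝ) :=
  (ContinuousLinearMap.compL ℝ X (Y →L[ℝ] ℝ) ℝ y'').comp
    (((ContinuousLinearMap.compL ℝ X (Y →L[ℝ] Z) (Y →L[ℝ] ℝ)).flip m).comp
      (ContinuousLinearMap.compL ℝ Y Z ℝ))

/-- The first Arens extension `m*** : X** × Y** → Z**` of a bounded bilinear map `m`,
defined by `⟨m***(x'', y''), z'⟩ = ⟨x'', m**(y'', z')⟩`. -/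
noncomputable def arens {X Y Z : Type*} [NormedAddCommGroup X] [NormedSpace ℝ X]
    [NormedAddCommGroup Y] [NormedSpace ℝ Y] [NormedAddCommGroup Z] [NormedSpace ℝ Z]
    (m : X →L[ℝ] Y →L[ℝ] Z) (x'' : (X →L[ℝ] ℝ) →L[ℝ] ℝ) (y'' : (Y →L[ℝ] ℝ) →L[ℝ] ℝ) :
    (Z →L[ℝ] ℝ) →L[ℝ] ℝ :=
  x''.comp (arensHalf m y'')

/-- Canonical embedding of a normed space into its double dual. -/
noncomputable def incl {X : Type*} [NormedAddCommGroup X] [NormedSpace ℝ X] (x : X) :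
    (X →L[ℝ] ℝ) →L[ℝ] ℝ :=
  ContinuousLinearMap.apply ℝ ℝ x

/-- `f : E** → F**` is weak*-to-weak* continuous. -/
def WWCont {E F : Type*} [NormedAddCommGroup E] [NormedSpace ℝ E]
    [NormedAddCommGroup F] [NormedSpace ℝ F]
    (f : ((E →L[ℝ] ℝ) →L[ℝ] ℝ) → ((F →L[ℝ] ℝ) →L[ℝ] ℝ)) : Prop :=
  ∀ (l : Filter ((E →L[ℝ] ℝ) →L[ℝ] ℝ)) (u : (E →L[ℝ] ℝ) →L[ℝ] ℝ),
    (∀ φ : E →L[ℝ] ℝ, Filter.Tendsto (fun v => v φ) l (nhds (u φ))) →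
    ∀ ψ : F →L[ℝ] ℝ, Filter.Tendsto (fun v => f v ψ) l (nhds (f u ψ))

/-! ### Auxiliary lemmas -/

/-- Finite-dimensional Goldstine lemma: an element of the bidual can be approximated,
against finitely many dual functionals, by an element of the ball of radius `‖Λ‖`. -/
lemma myGoldstine {X : Type*} [NormedAddCommGroup X] [NormedSpace ℝ X]
    (Λ : (X →L[ℝ] ℝ) →L[ℝ] ℝ) {n : ℕ} (ξ : Fin n → (X →L[ℝ] ℝ)) {ε : ℝ} (hε : 0 < ε) :
    ∃ x : X, ‖x‖ ≤ ‖Λ‖ ∧ ∀ i, |ξ i x - Λ (ξ i)| < ε := by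
  classical
  set T : X →L[ℝ] (Fin n → ℝ) := ContinuousLinearMap.pi ξ with hT
  set w : Fin n → ℝ := fun i => Λ (ξ i) with hw
  set s : Set (Fin n → ℝ) := closure (T '' Metric.closedBall 0 ‖Λ‖) with hs
  have hws : w ∈ s := by
    by_contra hws
    have hconv : Convex ℝ s :=
      Convex.closure ((convex_closedBall (0 : X) ‖Λ‖).linear_image T.toLinearMap)
    obtain ⟨f, u, hfs, hfw⟩ := geometric_hahn_banach_closed_point hconv isClosed_closure hws
    have hu0 : 0 < u := by
      have h0 : (0 : Fin n → ℝ) ∈ s :=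
        subset_closure ⟨0, Metric.mem_closedBall_self (norm_nonneg Λ), map_zero T⟩
      simpa [map_zero] using hfs 0 h0
    set g : X →L[ℝ] ℝ := f.comp T with hg
    have hgsum : g = ∑ i, (f fun j => if i = j then (1:ℝ) else 0) • ξ i := by
      ext x
      have hx := pi_eq_sum_univ (T x)
      calc g x = f (T x) := rfl
        _ = f (∑ i, (T x i) • fun j => if i = j then (1:ℝ) else 0) := by rw [← hx]
        _ = ∑ i, (T x i) * (f fun j => if i = j then (1:ℝ) else 0) := by
            rw [map_sum]; simp [smul_eq_mul]
        _ = _ := by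
          simp [ContinuousLinearMap.sum_apply, mul_comm]
          rfl
    have hfwΛg : f w = Λ g := by
      have h1 : w = ∑ i, (w i) • fun j => if i = j then (1:ℝ) else 0 := pi_eq_sum_univ w
      rw [h1, map_sum, hgsum, map_sum]
      simp [smul_eq_mul, hw, mul_comm]
    have hball : ∀ x : X, ‖x‖ ≤ ‖Λ‖ → |g x| ≤ u := by
      intro x hx
      have h1 : g x < u := hfs (T x)
        (subset_closure ⟨x, by simpa [Metric.mem_closedBall] using hx, rfl⟩)
      have h2 : g (-x) < u := hfs (T (-x))
        (subset_closure ⟨-x, by simpa [Metric.mem_closedBall] using hx, rfl⟩)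
      rw [map_neg] at h2
      cases abs_cases (g x) with
      | inl h => linarith [h.1]
      | inr h => linarith [h.1]
    have hΛg : Λ g ≤ ‖Λ‖ * ‖g‖ := le_trans (le_abs_self _) (Λ.le_opNorm g)
    rcases eq_or_lt_of_le (norm_nonneg Λ) with hΛ0 | hΛ0
    · rw [← hΛ0] at hΛg
      simp at hΛg
      linarith [hfwΛg ▸ hfw]
    · have hgle : ‖g‖ ≤ u / ‖Λ‖ := by
        refine ContinuousLinearMap.opNorm_le_bound g (div_nonneg hu0.le (norm_nonneg Λ)) ?_
        intro x
        rcases eq_or_ne x 0 with rfl | hx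
        · simp
        · have hxn : 0 < ‖x‖ := norm_pos_iff.mpr hx
          set y := (‖Λ‖ / ‖x‖) • x with hy
          have hyn : ‖y‖ ≤ ‖Λ‖ := by
            rw [hy, norm_smul, Real.norm_eq_abs, abs_of_nonneg (by positivity)]
            rw [div_mul_eq_mul_div, mul_div_assoc, div_self hxn.ne', mul_one]
          have hb := hball y hyn
          have hgy : |g y| = ‖Λ‖ / ‖x‖ * |g x| := by
            rw [hy, map_smul, smul_eq_mul, abs_mul,
              abs_of_nonneg (by positivity : (0:ℝ) ≤ ‖Λ‖ / ‖x‖)]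
          rw [hgy, div_mul_eq_mul_div, div_le_iff₀ hxn] at hb
          rw [Real.norm_eq_abs, div_mul_eq_mul_div, le_div_iff₀ hΛ0]
          linarith
      have hcontra : Λ g ≤ u := by
        calc Λ g ≤ ‖Λ‖ * ‖g‖ := hΛg
          _ ≤ ‖Λ‖ * (u / ‖Λ‖) := mul_le_mul_of_nonneg_left hgle (norm_nonneg Λ)
          _ = u := by field_simp
      linarith [hfwΛg ▸ hfw]
  rw [Metric.mem_closure_iff] at hws
  obtain ⟨p, ⟨x, hx, rfl⟩, hdist⟩ := hws ε hε
  refine ⟨x, by simpa [Metric.mem_closedBall] using hx, fun i => ?_⟩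
  have h1 := dist_le_pi_dist w (T x) i
  have h2 : dist (w i) (T x i) < ε := lt_of_le_of_lt h1 hdist
  rw [Real.dist_eq, abs_sub_comm] at h2
  have h3 : T x i = ξ i x := rfl
  rw [h3] at h2
  simpa [hw] using h2

/-- Limits of bounded real sequences along an ultrafilter. -/
lemma myUlim (U : Ultrafilter ℕ) {r : ℕ → ℝ} {M : ℝ} (h : ∀ n, |r n| ≤ M) :
    ∃ L, |L| ≤ M ∧ Tendsto r (↑U) (𝓝 L) := by
  have hmem : ↑(U.map r) ≤ 𝓟 (Set.Icc (-M) M) := by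
    rw [le_principal_iff]
    have : ∀ n, r n ∈ Set.Icc (-M) M := fun n => abs_le.mp (h n)
    exact Filter.mem_map.mpr (show r ⁻¹' Set.Icc (-M) M ∈ (U : Filter ℕ) from Filter.univ_mem' this)
  obtain ⟨L, hL, hle⟩ := isCompact_Icc.ultrafilter_le_nhds (U.map r) hmem
  exact ⟨L, abs_le.mpr hL, hle⟩

/-- A uniformly bounded sequence of functionals has a pointwise limit along an
ultrafilter, which is again a continuous linear functional. -/
lemma myUlimCLM {X : Type*} [NormedAddCommGroup X] [NormedSpace ℝ X]
    (U : Ultrafilter ℕ) (T : ℕ → X →L[ℝ] ℝ) (C : ℝ) (hC : ∀ n x, |T n x| ≤ C * ‖x‖) :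
    ∃ Ti : X →L[ℝ] ℝ, ∀ x, Tendsto (fun n => T n x) (↑U) (𝓝 (Ti x)) := by
  have key : ∀ x : X, ∃ L, |L| ≤ C * ‖x‖ ∧ Tendsto (fun n => T n x) (↑U) (𝓝 L) :=
    fun x => myUlim U (fun n => hC n x)
  choose L hLb hLt using key
  have hadd : ∀ x y, L (x + y) = L x + L y := by
    intro x y
    refine tendsto_nhds_unique ?_ ((hLt x).add (hLt y))
    have h1 : (fun n => T n (x + y)) = fun n => T n x + T n y := by
      funext n; exact map_add (T n) x y
    rw [← h1]; exact hLt (x + y)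
  have hsmul : ∀ (a : ℝ) x, L (a • x) = a * L x := by
    intro a x
    refine tendsto_nhds_unique ?_ ((hLt x).const_mul a)
    have h1 : (fun n => T n (a • x)) = fun n => a * T n x := by
      funext n; rw [map_smul, smul_eq_mul]
    rw [← h1]; exact hLt (a • x)
  let Lm : X →ₗ[ℝ] ℝ :=
    { toFun := L
      map_add' := hadd
      map_smul' := by intro a x; simpa using hsmul a x }
  refine ⟨Lm.mkContinuous C (fun x => by rw [Real.norm_eq_abs]; exact hLb x), hLt⟩

/-- The canonical embedding into the double dual is isometric. -/
lemma myJnorm {X : Type*} [NormedAddCommGroup X] [NormedSpace ℝ X] (x : X) :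
    ‖(ContinuousLinearMap.apply ℝ ℝ x : (X →L[ℝ] ℝ) →L[ℝ] ℝ)‖ = ‖x‖ := by
  refine le_antisymm (ContinuousLinearMap.opNorm_le_bound _ (norm_nonneg x) fun c => ?_) ?_
  · calc ‖(ContinuousLinearMap.apply ℝ ℝ x) c‖ = ‖c x‖ := rfl
      _ ≤ ‖c‖ * ‖x‖ := c.le_opNorm x
      _ = ‖x‖ * ‖c‖ := mul_comm _ _
  · rcases eq_or_ne x 0 with rfl | hx
    · simp; positivity
    · obtain ⟨g, hg1, hgx⟩ := exists_dual_vector ℝ x (norm_ne_zero_iff.mpr hx)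
      calc ‖x‖ = ‖g x‖ := by rw [hgx]; simp
        _ = ‖(ContinuousLinearMap.apply ℝ ℝ x) g‖ := rfl
        _ ≤ ‖(ContinuousLinearMap.apply ℝ ℝ x : (X →L[ℝ] ℝ) →L[ℝ] ℝ)‖ * ‖g‖ :=
            ContinuousLinearMap.le_opNorm _ g
        _ = ‖(ContinuousLinearMap.apply ℝ ℝ x : (X →L[ℝ] ℝ) →L[ℝ] ℝ)‖ := by rw [hg1, mul_one]

/-- Hahn–Banach separation of an element of the bidual from the canonical image of the
space: if `Θ` is not of the form `c ↦ c x`, there is `Λ` in the third dual vanishing on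
the canonical image of `X` with `Λ Θ = 1`. -/
lemma mySep {X : Type*} [NormedAddCommGroup X] [NormedSpace ℝ X] [CompleteSpace X]
    {Θ : (X →L[ℝ] ℝ) →L[ℝ] ℝ} (h : ∀ x : X, ∃ c : X →L[ℝ] ℝ, Θ c ≠ c x) :
    ∃ Λ : (((X →L[ℝ] ℝ) →L[ℝ] ℝ)) →L[ℝ] ℝ,
      (∀ x : X, Λ (ContinuousLinearMap.apply ℝ ℝ x) = 0) ∧ Λ Θ = 1 := by
  classical
  set J : X →L[ℝ] ((X →L[ℝ] ℝ) →L[ℝ] ℝ) := ContinuousLinearMap.apply ℝ ℝ with hJ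
  have hnotin : Θ ∉ Set.range J := by
    rintro ⟨x, rfl⟩
    obtain ⟨c, hc⟩ := h x
    exact hc rfl
  have hiso : Isometry J := AddMonoidHomClass.isometry_of_norm J (fun x => myJnorm x)
  have hclosed : IsClosed (Set.range J) := hiso.isClosedEmbedding.isClosed_range
  have hconv : Convex ℝ (Set.range J) := by
    rintro p ⟨xp, rfl⟩ q ⟨xq, rfl⟩ a b _ _ _
    exact ⟨a • xp + b • xq, by rw [map_add, map_smul, map_smul]⟩
  obtain ⟨f, u, hfs, hfΘ⟩ := geometric_hahn_banach_closed_point hconv hclosed hnotin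
  have hu0 : 0 < u := by
    have h0 : ((0 : ((X →L[ℝ] ℝ) →L[ℝ] ℝ))) ∈ Set.range J := ⟨0, map_zero J⟩
    simpa using hfs 0 h0
  have hvanish : ∀ x : X, f (J x) = 0 := by
    intro x
    by_contra ht
    have hs : f (J (((u + 1) / f (J x)) • x)) < u :=
      hfs _ ⟨((u + 1) / f (J x)) • x, rfl⟩
    rw [map_smul, map_smul, smul_eq_mul, div_mul_cancel₀ _ ht] at hs
    linarith
  have hfΘpos : 0 < f Θ := lt_trans hu0 hfΘ
  refine ⟨(f Θ)⁻¹ • f, fun x => ?_, ?_⟩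
  · simp [hvanish x]
  · simp [inv_mul_cancel₀ hfΘpos.ne']

/-- History-carrying recursion. -/
noncomputable def myHist {α : Type*} (z : α) (p : ℕ → (ℕ → α) → α) : ℕ → ℕ → α
  | 0 => fun _ => z
  | Nat.succ k => fun j => if j = k then p k (myHist z p k) else myHist z p k j

lemma myHist_spec {α : Type*} (z : α) (p : ℕ → (ℕ → α) → α) :
    ∀ m k, k < m → myHist z p m k = p k (myHist z p k) := by
  intro m
  induction m with
  | zero => exact fun k hk => absurd hk (Nat.not_lt_zero k)
  | succ m ih =>
    intro k hk
    show (if k = m then p m (myHist z p m) else myHist z p m k) = _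
    by_cases h : k = m
    · subst h; simp
    · have hk' : k < m := by omega
      rw [if_neg h]
      exact ih k hk'

/-- The gliding-hump construction: if `Λ` in the third dual annihilates the canonical
image of `B` but `Λ (X'' ∘ P) = 1`, we can construct bounded sequences `c k` of
functionals and `b m` of vectors with an asymptotically triangular evaluation matrix. -/
lemma myConstruction {B : Type*} [NormedAddCommGroup B] [NormedSpace ℝ B]
    (P : (B →L[ℝ] ℝ) →L[ℝ] (B →L[ℝ] ℝ)) (X'' : (B →L[ℝ] ℝ) →L[ℝ] ℝ)
    (Λ : ((B →L[ℝ] ℝ) →L[ℝ] ℝ) →L[ℝ] ℝ)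
    (hΛ0 : ∀ z : B, Λ ((ContinuousLinearMap.apply ℝ ℝ z).comp P) = 0)
    (hΛΘ : Λ (X''.comp P) = 1) :
    ∃ (c : ℕ → (B →L[ℝ] ℝ)) (b : ℕ → B) (C : ℝ),
      (∀ k, ‖c k‖ ≤ C) ∧ (∀ m, ‖b m‖ ≤ ‖X''‖) ∧
      (∀ k, |X'' (P (c k)) - 1| < 1/8) ∧
      (∀ k j, j < k → |(P (c k)) (b j)| < 1/8) ∧
      (∀ k m, k ≤ m → |(P (c k)) (b m) - X'' (P (c k))| < 1/8) := by
  classical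
  have heps : (0:ℝ) < 1/8 := by norm_num
  let tstC : ∀ k : ℕ, (ℕ → ((B →L[ℝ] ℝ) × B)) → Fin (k+1) → ((B →L[ℝ] ℝ) →L[ℝ] ℝ) :=
    fun k h => Fin.cons (X''.comp P)
      (fun j : Fin k => (ContinuousLinearMap.apply ℝ ℝ ((h (j : ℕ)).2)).comp P)
  let pickC : ∀ k : ℕ, (ℕ → ((B →L[ℝ] ℝ) × B)) → (B →L[ℝ] ℝ) :=
    fun k h => Classical.choose (myGoldstine Λ (tstC k h) heps)
  let tstB : ∀ k : ℕ, (ℕ → ((B →L[ℝ] ℝ) × B)) → Fin (k+1) → (B →L[ℝ] ℝ) :=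
    fun k h j => P (if (j : ℕ) < k then (h (j : ℕ)).1 else pickC k h)
  let pickB : ∀ k : ℕ, (ℕ → ((B →L[ℝ] ℝ) × B)) → B :=
    fun k h => Classical.choose (myGoldstine X'' (tstB k h) heps)
  let pick : ℕ → (ℕ → ((B →L[ℝ] ℝ) × B)) → ((B →L[ℝ] ℝ) × B) :=
    fun k h => (pickC k h, pickB k h)
  let F : ℕ → ℕ → ((B →L[ℝ] ℝ) × B) := myHist (0, 0) pick
  let c : ℕ → (B →L[ℝ] ℝ) := fun k => pickC k (F k)
  let b : ℕ → B := fun k => pickB k (F k)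
  have hFk : ∀ m k, k < m → F m k = (c k, b k) := fun m k hk => myHist_spec (0,0) pick m k hk
  have hcspec := fun k => Classical.choose_spec (myGoldstine Λ (tstC k (F k)) heps)
  have hbspec : ∀ k, ‖b k‖ ≤ ‖X''‖ ∧
      ∀ i : Fin (k+1), |tstB k (F k) i (b k) - X'' (tstB k (F k) i)| < 1/8 :=
    fun k => Classical.choose_spec (myGoldstine X'' (tstB k (F k)) heps)
  refine ⟨c, b, _, fun k => (hcspec k).1, fun m => (hbspec m).1, ?_, ?_, ?_⟩
  · intro k
    have h1 := (hcspec k).2 0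
    have h2 : tstC k (F k) 0 = X''.comp P := Fin.cons_zero _ _
    rw [h2, hΛΘ] at h1
    exact h1
  · intro k j hj
    have h1 := (hcspec k).2 (Fin.succ ⟨j, hj⟩)
    have h2 : tstC k (F k) (Fin.succ ⟨j, hj⟩)
        = (ContinuousLinearMap.apply ℝ ℝ ((F k ((⟨j, hj⟩ : Fin k) : ℕ)).2)).comp P :=
      Fin.cons_succ _ _ _
    have h3 : ((⟨j, hj⟩ : Fin k) : ℕ) = j := rfl
    rw [h3] at h2
    rw [h2, hΛ0 ((F k j).2), sub_zero] at h1
    have hb : (F k j).2 = b j := by rw [hFk k j hj]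
    rw [hb] at h1
    exact h1
  · intro k m hkm
    have h1 := (hbspec m).2 ⟨k, by omega⟩
    have htst : tstB m (F m) ⟨k, by omega⟩ = P (c k) := by
      show P (if k < m then (F m k).1 else pickC m (F m)) = P (c k)
      by_cases h : k < m
      · rw [if_pos h, hFk m k h]
      · have hkm' : k = m := by omega
        rw [if_neg h]
        subst hkm'
        rfl
    rw [htst] at h1
    exact h1

/-- if `B** = a₀B**` for some `a₀ ∈ A` with the Rw*w-property with
respect to `B`, then `Z_{A**}(B**) = B**`. -/
theorem rightCenter_eq_of_factor_and_Rwsw {A B : Type*}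
    [NonUnitalNormedRing A] [NormedSpace ℝ A] [IsScalarTower ℝ A A] [SMulCommClass ℝ A A]
    [CompleteSpace A] [NormedAddCommGroup B] [NormedSpace ℝ B] [CompleteSpace B]
    (πl : A →L[ℝ] B →L[ℝ] B) (πr : B →L[ℝ] A →L[ℝ] B)
    (hl : ∀ (a₁ a₂ : A) (b : B), πl (a₁ * a₂) b = πl a₁ (πl a₂ b))
    (hr : ∀ (b : B) (a₁ a₂ : A), πr b (a₁ * a₂) = πr (πr b a₁) a₂)
    (hc : ∀ (a₁ : A) (b : B) (a₂ : A), πr (πl a₁ b) a₂ = πl a₁ (πr b a₂))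
    (a₀ : A)
    (hfac : ∀ b'' : (B →L[ℝ] ℝ) →L[ℝ] ℝ, ∃ x'' : (B →L[ℝ] ℝ) →L[ℝ] ℝ,
      b'' = arens πl (incl a₀) x'')
    (hR : ∀ {ι : Type} (l : Filter ι), l.NeBot → ∀ b' : ι → (B →L[ℝ] ℝ),
      (∀ b : B, Filter.Tendsto
        (fun i => ((b' i).comp (πl a₀)) b) l (nhds (0 : ℝ))) →
      ∀ F : (B →L[ℝ] ℝ) →L[ℝ] ℝ, Filter.Tendsto
        (fun i => F ((b' i).comp (πl a₀))) l (nhds (0 : ℝ))) :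
    ∀ b'' : (B →L[ℝ] ℝ) →L[ℝ] ℝ,
      WWCont (fun a'' : (A →L[ℝ] ℝ) →L[ℝ] ℝ => arens πr b'' a'') := by
  intro b''
  obtain ⟨x'', hx''⟩ := hfac b''
  subst hx''
  intro l u hconv ψ
  -- Key step: the functional `c ↦ x''(c ∘ πl a₀)` is represented by an element of `B`.
  have key : ∃ bs : B, ∀ c : B →L[ℝ] ℝ, x'' (c.comp (πl a₀)) = c bs := by
    by_contra hnot
    push_neg at hnot
    set P : (B →L[ℝ] ℝ) →L[ℝ] (B →L[ℝ] ℝ) :=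
      (ContinuousLinearMap.compL ℝ B B ℝ).flip (πl a₀) with hP
    have hPc : ∀ c : B →L[ℝ] ℝ, P c = c.comp (πl a₀) := fun c => rfl
    obtain ⟨Λ, hΛ0, hΛΘ⟩ := mySep (Θ := x''.comp P) (fun bs => by
      obtain ⟨c, hc⟩ := hnot bs
      exact ⟨c, hc⟩)
    have hΛ0' : ∀ z : B, Λ ((ContinuousLinearMap.apply ℝ ℝ z).comp P) = 0 := by
      intro z
      have h1 : (ContinuousLinearMap.apply ℝ ℝ z).comp P
          = ContinuousLinearMap.apply ℝ ℝ (πl a₀ z) := by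
        ext c; rfl
      rw [h1]
      exact hΛ0 (πl a₀ z)
    obtain ⟨c, b, C, hcC, hbR, hΘ1, hsmall, hbig⟩ := myConstruction P x'' Λ hΛ0' hΛΘ
    set U : Ultrafilter ℕ := Ultrafilter.of atTop with hU
    have hUle : (↑U : Filter ℕ) ≤ atTop := Ultrafilter.of_le _
    obtain ⟨cinf, hcinf⟩ := myUlimCLM U c C (fun k z => by
      calc |c k z| = ‖c k z‖ := (Real.norm_eq_abs _).symm
        _ ≤ ‖c k‖ * ‖z‖ := (c k).le_opNorm z
        _ ≤ C * ‖z‖ := mul_le_mul_of_nonneg_right (hcC k) (norm_nonneg z))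
    obtain ⟨β, hβ⟩ := myUlimCLM U (fun m => ContinuousLinearMap.apply ℝ ℝ (b m)) ‖x''‖
      (fun m φ => by
        calc |(ContinuousLinearMap.apply ℝ ℝ (b m)) φ| = ‖φ (b m)‖ := (Real.norm_eq_abs _).symm
          _ ≤ ‖φ‖ * ‖b m‖ := φ.le_opNorm (b m)
          _ ≤ ‖φ‖ * ‖x''‖ := mul_le_mul_of_nonneg_left (hbR m) (norm_nonneg φ)
          _ = ‖x''‖ * ‖φ‖ := mul_comm _ _)
    have hRconc := hR (↑U) U.neBot (fun k => c k - cinf) (fun z => by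
      have h1 : ∀ k : ℕ, ((c k - cinf).comp (πl a₀)) z = c k (πl a₀ z) - cinf (πl a₀ z) :=
        fun k => rfl
      simp only [h1]
      simpa using (hcinf (πl a₀ z)).sub (tendsto_const_nhds (x := cinf (πl a₀ z)))) β
    have hlow : ∀ k, 5/8 ≤ β ((c k - cinf).comp (πl a₀)) := by
      intro k
      have hβk := hβ ((c k - cinf).comp (πl a₀))
      refine ge_of_tendsto hβk ?_
      have hev2 : ∀ᶠ m in (↑U : Filter ℕ), k ≤ m := hUle (eventually_ge_atTop k)
      filter_upwards [hev2] with m hm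
      have hev : (ContinuousLinearMap.apply ℝ ℝ (b m)) ((c k - cinf).comp (πl a₀))
          = c k (πl a₀ (b m)) - cinf (πl a₀ (b m)) := rfl
      rw [hev]
      have hA : 3/4 < c k (πl a₀ (b m)) := by
        have h1 := hbig k m hm
        have h2 := hΘ1 k
        have h3 : P (c k) (b m) = c k (πl a₀ (b m)) := rfl
        rw [h3] at h1
        have h4 := abs_lt.mp h1
        have h5 := abs_lt.mp h2
        linarith
      have hB : |cinf (πl a₀ (b m))| ≤ 1/8 := by
        have h4 := hcinf (πl a₀ (b m))
        have h5 : ∀ᶠ k' in (↑U : Filter ℕ), |c k' (πl a₀ (b m))| ≤ 1/8 := by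
          have h6 : ∀ᶠ k' in (↑U : Filter ℕ), m < k' := hUle (eventually_gt_atTop m)
          filter_upwards [h6] with k' hk'
          have h7 := hsmall k' m hk'
          have h8 : P (c k') (b m) = c k' (πl a₀ (b m)) := rfl
          rw [h8] at h7
          exact h7.le
        exact le_of_tendsto h4.abs h5
      have h9 := abs_le.mp hB
      linarith
    have hev3 : ∀ᶠ k in (↑U : Filter ℕ), β ((c k - cinf).comp (πl a₀)) < 5/8 := by
      have h1 : ∀ k : ℕ, β ((fun k => c k - cinf) k |>.comp (πl a₀))
          = β ((c k - cinf).comp (πl a₀)) := fun k => rfl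
      exact hRconc.eventually_lt_const (by norm_num)
    obtain ⟨k, hk⟩ := hev3.exists
    linarith [hlow k]
  obtain ⟨bs, hbs⟩ := key
  have hrepr : ∀ v : (A →L[ℝ] ℝ) →L[ℝ] ℝ,
      arens πr (arens πl (incl a₀) x'') v ψ = v (ψ.comp (πr bs)) := by
    intro v
    calc arens πr (arens πl (incl a₀) x'') v ψ
        = x'' ((arensHalf πr v ψ).comp (πl a₀)) := rfl
      _ = (arensHalf πr v ψ) bs := hbs _
      _ = v (ψ.comp (πr bs)) := rfl
  have hfun : (fun v => arens πr (arens πl (incl a₀) x'') v ψ)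
      = fun v => v (ψ.comp (πr bs)) := funext hrepr
  rw [hfun, hrepr u]
  exact hconv (ψ.comp (πr bs))
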